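/- arXiv:1912.00211 — 9 statements merged into one kernel-verified Lean document; each statement's English description precedes it below -/
import Mathlib

section
/- Let I be a finite nonempty set of players, and for each i ∈ I let S i be a nonempty compact topological space and u i : (Π j, S j) → ℝ a continuous utility function. Then for every player i, the value function v i : (Π j, S j) → ℝ, defined by v i p = inf {u i q | q ∈ B₋ᵢ p}, is upper semicontinuous on the product space Π j, S j. -/
/-- The deviation set `B₋ᵢ p`: profiles `q` with `q i = p i` and, for every `j ≠ i`,
either `q j = p j` or `q j` is a better response of player `j` at `p`. -/
def Dev {I : Type*} [DecidableEq I] {S : I → Type*}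
    (u : ∀ i : I, (∀ j, S j) → ℝ) (i : I) (p : ∀ j, S j) : Set (∀ j, S j) :=
  {q | q i = p i ∧ ∀ j, j ≠ i → (q j = p j ∨ u j (Function.update p j (q j)) > u j p)}

/-- The value of a profile `p` to player `i`: the infimum of `u i` over the deviation set. -/
noncomputable def val {I : Type*} [DecidableEq I] {S : I → Type*}
    (u : ∀ i : I, (∀ j, S j) → ℝ) (i : I) (p : ∀ j, S j) : ℝ :=
  sInf (u i '' Dev u i p)

/-- The value function of each player is upper semicontinuous. -/
theorem value_upperSemicontinuous {I : Type*} [Fintype I] [Nonempty I] [DecidableEq I]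
    {S : I → Type*} [∀ i, TopologicalSpace (S i)] [∀ i, CompactSpace (S i)]
    [∀ i, Nonempty (S i)]
    (u : ∀ i : I, (∀ j, S j) → ℝ) (hu : ∀ i, Continuous (u i)) (i : I) :
    UpperSemicontinuous (val u i) := by
  classical
  -- boundedness below of all relevant images
  have hbdd : ∀ p : ∀ j, S j, BddBelow (u i '' Dev u i p) := by
    intro p
    exact ((isCompact_range (hu i)).bddBelow).mono (Set.image_subset_range _ _)
  have hself : ∀ p : ∀ j, S j, p ∈ Dev u i p := fun p =>
    ⟨rfl, fun j _ => Or.inl rfl⟩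
  intro p c hc
  -- extract a witness q ∈ Dev u i p with u i q < c
  have hne : (u i '' Dev u i p).Nonempty := ⟨u i p, p, hself p, rfl⟩
  rw [val, csInf_lt_iff (hbdd p) hne] at hc
  obtain ⟨_, ⟨q, hq, rfl⟩, hqc⟩ := hc
  -- the modified profile
  set F : (∀ j, S j) → ∀ j, S j := fun p' j => if j ≠ i ∧ q j ≠ p j then q j else p' j
    with hF
  have hFcont : Continuous F := by
    apply continuous_pi
    intro j
    by_cases h : j ≠ i ∧ q j ≠ p j
    · simp only [hF, if_pos h]; exact continuous_const
    · simp only [hF, if_neg h]; exact continuous_apply j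
  have hFp : F p = q := by
    funext j
    by_cases h : j ≠ i ∧ q j ≠ p j
    · simp [hF, h]
    · push_neg at h
      by_cases hji : j = i
      · subst hji; simp only [hF, ne_eq, not_true_eq_false, false_and, if_false]
        exact hq.1.symm
      · simp [hF, hji, h hji]
  -- eventual conditions
  have h1 : ∀ᶠ p' in nhds p, u i (F p') < c := by
    have : Continuous fun p' => u i (F p') := (hu i).comp hFcont
    have := this.continuousAt (x := p)
    exact this.eventually_lt continuousAt_const (by simpa [hFp] using hqc)
  have h2 : ∀ᶠ p' in nhds p, ∀ j, (j ≠ i ∧ q j ≠ p j) →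
      u j (Function.update p' j (q j)) > u j p' := by
    rw [Filter.eventually_all]
    intro j
    by_cases h : j ≠ i ∧ q j ≠ p j
    · have hlt : u j p < u j (Function.update p j (q j)) := by
        rcases hq.2 j h.1 with h' | h'
        · exact absurd h' h.2
        · exact h'
      have hc1 : Continuous fun p' : ∀ j, S j => u j (Function.update p' j (q j)) := by
        apply (hu j).comp
        apply continuous_pi
        intro k
        by_cases hk : k = j
        · subst hk; simp only [Function.update_self]; exact continuous_const
        · simp only [Function.update_of_ne hk]; exact continuous_apply k
      have := ((hu j).continuousAt (x := p)).eventually_lt (hc1.continuousAt) hlt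
      filter_upwards [this] with p' hp' _
      exact hp'
    · filter_upwards with p' hp'
      exact absurd hp' h
  filter_upwards [h1, h2] with p' hp1 hp2
  -- F p' ∈ Dev u i p'
  have hmem : F p' ∈ Dev u i p' := by
    refine ⟨?_, ?_⟩
    · simp [hF]
    · intro j hj
      by_cases h : q j = p j
      · left; simp [hF, h]
      · right
        have hcond : j ≠ i ∧ q j ≠ p j := ⟨hj, h⟩
        have : F p' j = q j := by simp [hF, hcond]
        rw [this]
        exact hp2 j hcond
  calc val u i p' ≤ u i (F p') := csInf_le (hbdd p') ⟨F p', hmem, rfl⟩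
    _ < c := hp1
end

section
/- Let I be a finite nonempty set of players, and for each i ∈ I let S i be a nonempty compact topological space and u i : (Π j, S j) → ℝ a continuous utility function. Then the game has an optimin point: there exists a profile p̄ such that there is no profile p with v i p ≥ v i p̄ for all i ∈ I and v j p > v j p̄ for some j ∈ I. -/
section aux

variable {I : Type*} [Fintype I] [DecidableEq I]
    {S : I → Type*} [∀ i, TopologicalSpace (S i)] [∀ i, CompactSpace (S i)]
    [∀ i, Nonempty (S i)]
    (u : ∀ i : I, (∀ j, S j) → ℝ)

lemma self_mem_Dev (i : I) (p : ∀ j, S j) : p ∈ Dev u i p :=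
  ⟨rfl, fun j _ => Or.inl rfl⟩

lemma bddBelow_image (hu : Continuous (u i)) (A : Set (∀ j, S j)) :
    BddBelow (u i '' A) :=
  (isCompact_range hu).bddBelow.mono (Set.image_subset_range _ _)

lemma val_usc (hu : ∀ i, Continuous (u i)) (i : I) :
    UpperSemicontinuous (val u i) := by
  classical
  intro p y hy
  -- obtain a witness q in the deviation set with u i q < y
  obtain ⟨r, hr, hry⟩ := exists_lt_of_csInf_lt
    (Set.Nonempty.image _ ⟨p, self_mem_Dev u i p⟩) hy
  obtain ⟨q, hq, rfl⟩ := hr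
  -- the modified profile: keep q's deviating coordinates, follow p' elsewhere
  set Q : (∀ j, S j) → ∀ j, S j := fun p' j => if q j = p j then p' j else q j with hQ
  have hQcont : Continuous Q := by
    apply continuous_pi
    intro j
    by_cases h : q j = p j
    · simpa [hQ, h] using continuous_apply j
    · simpa [hQ, h] using continuous_const
  have hQp : Q p = q := by
    funext j
    by_cases h : q j = p j <;> simp [hQ, h]
  -- the good open set
  set N : Set (∀ j, S j) :=
    {p' | u i (Q p') < y ∧ ∀ j, q j ≠ p j →
      u j (Function.update p' j (q j)) > u j p'} with hN
  have hNopen : IsOpen N := by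
    apply IsOpen.inter
    · exact isOpen_lt ((hu i).comp hQcont) continuous_const
    · have : {p' : ∀ j, S j | ∀ j, q j ≠ p j →
          u j (Function.update p' j (q j)) > u j p'} =
          ⋂ j, {p' : ∀ j, S j | q j ≠ p j →
            u j (Function.update p' j (q j)) > u j p'} := by
        ext p'; simp
      rw [show (fun p' => ∀ j, q j ≠ p j →
          u j (Function.update p' j (q j)) > u j p') =
          {p' : ∀ j, S j | ∀ j, q j ≠ p j →
          u j (Function.update p' j (q j)) > u j p'} from rfl, this]
      apply isOpen_iInter_of_finite
      intro j
      by_cases h : q j = p j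
      · simp [h]
      · have : {p' : ∀ j, S j | q j ≠ p j →
            u j (Function.update p' j (q j)) > u j p'} =
            {p' | u j p' < u j (Function.update p' j (q j))} := by
          ext p'; simp [h]
        rw [this]
        exact isOpen_lt (hu j)
          ((hu j).comp (continuous_id.update j continuous_const))
  have hpN : p ∈ N := by
    refine ⟨by rwa [hQp], fun j hj => ?_⟩
    have hji : j ≠ i := by
      intro h; exact hj (h ▸ hq.1)
    rcases hq.2 j hji with h | h
    · exact absurd h hj
    · exact h
  filter_upwards [hNopen.mem_nhds hpN] with p' hp'
  have hmem : Q p' ∈ Dev u i p' := by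
    constructor
    · simp [hQ, hq.1]
    · intro j hji
      by_cases h : q j = p j
      · exact Or.inl (by simp [hQ, h])
      · refine Or.inr ?_
        have := hp'.2 j h
        simpa [hQ, h] using this
  exact lt_of_le_of_lt
    (csInf_le (bddBelow_image u (hu i) _) (Set.mem_image_of_mem _ hmem)) hp'.1

end aux

/-- Every game with compact strategy spaces and continuous utilities has an optimin point. -/
theorem exists_optimin {I : Type*} [Fintype I] [Nonempty I] [DecidableEq I]
    {S : I → Type*} [∀ i, TopologicalSpace (S i)] [∀ i, CompactSpace (S i)]
    [∀ i, Nonempty (S i)]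
    (u : ∀ i : I, (∀ j, S j) → ℝ) (hu : ∀ i, Continuous (u i)) :
    ∃ pbar : ∀ j, S j, ¬ ∃ p : ∀ j, S j,
      (∀ i, val u i pbar ≤ val u i p) ∧ ∃ j, val u j pbar < val u j p := by
  classical
  set F : (∀ j, S j) → ℝ := fun p => ∑ i, val u i p with hF
  -- F is upper semicontinuous
  have hFusc : UpperSemicontinuous F := by
    intro p y hy
    set n : ℕ := Fintype.card I with hn
    have hnpos : (0 : ℝ) < n := by
      have := Fintype.card_pos (α := I)
      exact_mod_cast this
    set ε : ℝ := (y - F p) / n with hε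
    have hεpos : 0 < ε := div_pos (by linarith) hnpos
    have h1 : ∀ i : I, ∀ᶠ p' in nhds p, val u i p' < val u i p + ε :=
      fun i => val_usc u hu i p (val u i p + ε) (by linarith)
    filter_upwards [Filter.eventually_all.2 h1] with p' hp'
    have : F p' < ∑ i : I, (val u i p + ε) :=
      Finset.sum_lt_sum_of_nonempty Finset.univ_nonempty (fun i _ => hp' i)
    have h2 : ∑ i : I, (val u i p + ε) = F p + n * ε := by
      rw [Finset.sum_add_distrib]
      simp [hF, hn, mul_comm]
    have h3 : F p + n * ε = y := by
      rw [hε, mul_div_cancel₀ _ (ne_of_gt hnpos)]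
      ring
    linarith [this, h2 ▸ this]
  -- F attains its maximum by compactness
  have hmax : ∃ pbar : ∀ j, S j, ∀ p, F p ≤ F pbar := by
    have key : (⋂ p : ∀ j, S j, {z | F p ≤ F z}).Nonempty := by
      apply IsCompact.nonempty_iInter_of_directed_nonempty_isCompact_isClosed
      · intro p p'
        rcases le_total (F p) (F p') with h | h
        · exact ⟨p', fun z hz => le_trans h hz, fun z hz => hz⟩
        · exact ⟨p, fun z hz => hz, fun z hz => le_trans h hz⟩
      · exact fun p => ⟨p, by simp⟩
      · intro p
        apply IsClosed.isCompact
        have : {z | F p ≤ F z} = (F ⁻¹' Set.Iio (F p))ᶜ := by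
          ext z; simp [not_lt]
        rw [this]
        exact (hFusc.isOpen_preimage (F p)).isClosed_compl
      · intro p
        have : {z | F p ≤ F z} = (F ⁻¹' Set.Iio (F p))ᶜ := by
          ext z; simp [not_lt]
        rw [this]
        exact (hFusc.isOpen_preimage (F p)).isClosed_compl
    obtain ⟨pbar, hpbar⟩ := key
    exact ⟨pbar, fun p => Set.mem_iInter.1 hpbar p⟩
  obtain ⟨pbar, hpbar⟩ := hmax
  refine ⟨pbar, ?_⟩
  rintro ⟨p, hle, j, hlt⟩
  have : F pbar < F p :=
    Finset.sum_lt_sum (fun i _ => hle i) ⟨j, Finset.mem_univ j, hlt⟩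
  exact absurd (hpbar p) (not_le.2 this)
end

section
/- Optimin points are invariant under positive affine transformations of the utilities: let I be a finite nonempty set of players with nonempty strategy sets S i and bounded utility functions u i : (Π j, S j) → ℝ, and for each i let α i > 0 and β i ∈ ℝ and set û i = α i · u i + β i. Then a profile p̄ is an optimin point of the game with utilities (u i) if and only if p̄ is an optimin point of the game with utilities (û i). -/
/-- `pbar` is an optimin point: its value vector is Pareto optimal. -/
def IsOptimin {I : Type*} [DecidableEq I] {S : I → Type*}
    (u : ∀ i : I, (∀ j, S j) → ℝ) (pbar : ∀ j, S j) : Prop :=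
  ¬ ∃ p : ∀ j, S j, (∀ i, val u i pbar ≤ val u i p) ∧ ∃ j, val u j pbar < val u j p

lemma affine_sInf (a b : ℝ) (ha : 0 < a) (s : Set ℝ) (hne : s.Nonempty)
    (hbdd : BddBelow s) :
    sInf ((fun x => a * x + b) '' s) = a * sInf s + b := by
  have hglb : IsGLB s (sInf s) := isGLB_csInf hne hbdd
  have : IsGLB ((fun x => a * x + b) '' s) (a * sInf s + b) := by
    constructor
    · rintro y ⟨x, hx, rfl⟩
      have := hglb.1 hx
      dsimp only
      nlinarith
    · intro c hc
      have : (c - b) / a ≤ sInf s := by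
        apply hglb.2
        intro x hx
        have h2 : c ≤ a * x + b := hc ⟨x, hx, rfl⟩
        rw [div_le_iff₀ ha]; linarith
      rw [div_le_iff₀ ha] at this
      linarith
  exact this.csInf_eq (hne.image _)

/-- Optimin points are invariant under positive affine transformations of the utilities. -/
theorem optimin_invariant_affine {I : Type*} [Fintype I] [Nonempty I] [DecidableEq I]
    {S : I → Type*} [∀ i, Nonempty (S i)]
    (u : ∀ i : I, (∀ j, S j) → ℝ) (hb : ∀ i, ∃ C : ℝ, ∀ p, |u i p| ≤ C)
    (α β : I → ℝ) (hα : ∀ i, 0 < α i) (pbar : ∀ j, S j) :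
    IsOptimin u pbar ↔ IsOptimin (fun i p => α i * u i p + β i) pbar := by
  set v := fun i p => α i * u i p + β i with hv
  have hDev : ∀ i p, Dev v i p = Dev u i p := by
    intro i p
    ext q
    simp only [Dev, Set.mem_setOf_eq, hv]
    constructor <;> rintro ⟨h1, h2⟩ <;> refine ⟨h1, fun j hj => ?_⟩ <;>
        rcases h2 j hj with h | h
    · exact Or.inl h
    · right
      exact lt_of_mul_lt_mul_left (by linarith) (hα j).le
    · exact Or.inl h
    · right
      have := hα j
      nlinarith
  have hval : ∀ i p, val v i p = α i * val u i p + β i := by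
    intro i p
    have hne : (u i '' Dev u i p).Nonempty :=
      ⟨u i p, p, ⟨rfl, fun j hj => Or.inl rfl⟩, rfl⟩
    obtain ⟨C, hC⟩ := hb i
    have hbdd : BddBelow (u i '' Dev u i p) := by
      refine ⟨-C, ?_⟩
      rintro x ⟨q, _, rfl⟩
      have := abs_le.mp (hC q)
      linarith
    have : val v i p = sInf ((fun x => α i * x + β i) '' (u i '' Dev u i p)) := by
      rw [val, hDev, Set.image_image]
    rw [this, affine_sInf _ _ (hα i) _ hne hbdd, val]
  constructor
  · rintro h ⟨p, h1, j, h2⟩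
    refine h ⟨p, fun i => ?_, j, ?_⟩
    · have := h1 i
      rw [hval, hval] at this
      exact le_of_mul_le_mul_left (by linarith) (hα i)
    · rw [hval, hval] at h2
      exact lt_of_mul_lt_mul_left (by linarith) (hα j).le
  · rintro h ⟨p, h1, j, h2⟩
    refine h ⟨p, fun i => ?_, j, ?_⟩
    · have := h1 i
      have := hα i
      rw [hval, hval]
      nlinarith
    · have := hα j
      rw [hval, hval]
      nlinarith
end

section
/- Every Nash equilibrium of an n-person constant-sum game is an optimin point: let I be a finite nonempty set of players with nonempty strategy sets S i and bounded utility functions u i, and suppose there is c ∈ ℝ with Σ_{i ∈ I} u i p = c for every profile p. If p̄ is a Nash equilibrium, then p̄ is an optimin point. -/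
/-- Every Nash equilibrium of an n-person constant-sum game is an optimin point. -/
theorem nash_isOptimin_of_constantSum {I : Type*} [Fintype I] [Nonempty I] [DecidableEq I]
    {S : I → Type*} [∀ i, Nonempty (S i)]
    (u : ∀ i : I, (∀ j, S j) → ℝ) (hb : ∀ i, ∃ C : ℝ, ∀ p, |u i p| ≤ C)
    (c : ℝ) (hc : ∀ p : ∀ j, S j, ∑ i, u i p = c)
    (pbar : ∀ j, S j)
    (hnash : ∀ (i : I) (q : S i), u i (Function.update pbar i q) ≤ u i pbar) :
    IsOptimin u pbar := by
  -- At a Nash equilibrium, the deviation set is just {pbar}.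
  have hdev : ∀ i, Dev u i pbar = {pbar} := by
    intro i
    ext q
    constructor
    · rintro ⟨hqi, hq⟩
      simp only [Set.mem_singleton_iff]
      funext j
      by_cases hji : j = i
      · subst hji; exact hqi
      · rcases hq j hji with h | h
        · exact h
        · exact absurd (hnash j (q j)) (not_le.mpr h)
    · rintro rfl
      exact ⟨rfl, fun j _ => Or.inl rfl⟩
  have hval : ∀ i, val u i pbar = u i pbar := by
    intro i
    rw [val, hdev i, Set.image_singleton, csInf_singleton]
  -- For any p, val u i p ≤ u i p (since p ∈ Dev u i p and image is bounded below).
  have hle : ∀ (i : I) (p : ∀ j, S j), val u i p ≤ u i p := by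
    intro i p
    obtain ⟨C, hC⟩ := hb i
    apply csInf_le
    · refine ⟨-C, ?_⟩
      rintro x ⟨q, -, rfl⟩
      exact neg_le_of_abs_le (hC q)
    · exact ⟨p, ⟨rfl, fun j _ => Or.inl rfl⟩, rfl⟩
  rintro ⟨p, hall, j, hj⟩
  have h1 : ∀ i, u i pbar ≤ u i p := fun i => (hval i ▸ hall i).trans (hle i p)
  have h2 : u j pbar < u j p := lt_of_lt_of_le (hval j ▸ hj) (hle j p)
  have : (∑ i, u i pbar) < ∑ i, u i p :=
    Finset.sum_lt_sum (fun i _ => h1 i) ⟨j, Finset.mem_univ j, h2⟩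
  rw [hc pbar, hc p] at this
  exact lt_irrefl c this
end

section
/- Every Nash equilibrium of a general n-person game satisfies the optimin criterion in the associated (n+1)-person fictitious constant-sum game. Precisely: let I be a finite nonempty set of players with nonempty strategy sets S i and bounded utility functions u i, fix c ∈ ℝ, and define the auxiliary game with player set Option I, where player (some i) has strategy set S i and utility u i evaluated at the restriction of the profile to I, and the fictitious player none has the one-element strategy set and utility equal to c minus the sum of the other players' utilities. If p is a Nash equilibrium of the original game, then the profile of the auxiliary game that agrees with p on I (and assigns the fictitious player its unique strategy) is an optimin point of the auxiliary game. -/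
/-- Strategy sets of the `(n+1)`-person fictitious game: the fictitious player `none`
has a one-element strategy set. -/
def auxS {I : Type*} (S : I → Type*) : Option I → Type _
  | none => PUnit
  | some i => S i

/-- Utilities of the fictitious game: player `some i` gets `u i` of the restricted profile;
the fictitious player gets `c` minus the sum of the others' utilities, making the game
constant-sum with constant `c`. -/
noncomputable def auxU {I : Type*} [Fintype I] {S : I → Type*}
    (u : ∀ i : I, (∀ j, S j) → ℝ) (c : ℝ) :
    ∀ o : Option I, (∀ o', auxS S o') → ℝ
  | none => fun q => c - ∑ i, u i (fun j => q (some j))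
  | some i => fun q => u i (fun j => q (some j))

/-- The profile of the auxiliary game agreeing with `p` on `I`. -/
def auxP {I : Type*} {S : I → Type*} (p : ∀ j, S j) : ∀ o : Option I, auxS S o
  | none => PUnit.unit
  | some i => p i

/-- Every Nash equilibrium of a general n-person game is an optimin point of the
associated (n+1)-person fictitious constant-sum game. -/
theorem nash_isOptimin_fictitious {I : Type*} [Fintype I] [Nonempty I] [DecidableEq I]
    {S : I → Type*} [∀ i, Nonempty (S i)]
    (u : ∀ i : I, (∀ j, S j) → ℝ) (hb : ∀ i, ∃ C : ℝ, ∀ p, |u i p| ≤ C)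
    (c : ℝ) (p : ∀ j, S j)
    (hnash : ∀ (i : I) (q : S i), u i (Function.update p i q) ≤ u i p) :
    IsOptimin (auxU u c) (auxP p) := by
  classical
  choose C hC using hb
  rintro ⟨q, hle, j, hlt⟩
  -- no player can improve at the Nash profile in the auxiliary game
  have noimp : ∀ (o : Option I) (x : auxS S o),
      auxU u c o (Function.update (auxP p) o x) ≤ auxU u c o (auxP p) := by
    intro o x
    cases o with
    | none =>
      have hfun : (fun j => Function.update (auxP p) none x (some j)) = fun j => p j := by
        funext j
        rw [Function.update_of_ne (by simp)]
        rfl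
      show (c - ∑ i, u i fun j => Function.update (auxP p) none x (some j))
          ≤ c - ∑ i, u i (fun j => p j)
      rw [hfun]
    | some i =>
      have hfun : (fun j => Function.update (auxP p) (some i) x (some j))
          = Function.update p i x := by
        funext j
        by_cases hj : j = i
        · subst hj
          rw [Function.update_self]; exact (Function.update_self j x p).symm
        · rw [Function.update_of_ne (by simpa using hj)]; exact (Function.update_of_ne hj x p).symm
      show u i (fun j => Function.update (auxP p) (some i) x (some j)) ≤ u i (fun j => p j)
      rw [hfun]
      exact hnash i x
  have hself : ∀ (o : Option I) (r : ∀ o', auxS S o'), r ∈ Dev (auxU u c) o r :=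
    fun o r => ⟨rfl, fun j _ => Or.inl rfl⟩
  have hdev_pbar : ∀ o : Option I, Dev (auxU u c) o (auxP p) = {auxP p} := by
    intro o
    ext r
    constructor
    · rintro ⟨h1, h2⟩
      have : r = auxP p := by
        funext j'
        by_cases hj : j' = o
        · subst hj; exact h1
        · rcases h2 j' hj with h | h
          · exact h
          · exact absurd h (not_lt.mpr (noimp j' (r j')))
      simp [this]
    · intro h
      rw [Set.mem_singleton_iff] at h
      subst h
      exact hself o (auxP p)
  have hval_pbar : ∀ o, val (auxU u c) o (auxP p) = auxU u c o (auxP p) := by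
    intro o
    rw [val, hdev_pbar, Set.image_singleton, csInf_singleton]
  have hbdd : ∀ (o : Option I) (r : ∀ o', auxS S o'),
      BddBelow (auxU u c o '' Dev (auxU u c) o r) := by
    intro o r
    cases o with
    | none =>
      refine ⟨c - ∑ i, C i, ?_⟩
      rintro x ⟨s, _, rfl⟩
      show c - ∑ i, C i ≤ c - ∑ i, u i (fun j => s (some j))
      have hsum' : ∑ i, u i (fun j => s (some j)) ≤ ∑ i, C i :=
        Finset.sum_le_sum fun i _ => le_trans (le_abs_self _) (hC i _)
      linarith
    | some i =>
      refine ⟨-C i, ?_⟩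
      rintro x ⟨s, _, rfl⟩
      show -C i ≤ u i (fun j => s (some j))
      have := abs_le.mp (hC i (fun j => s (some j)))
      linarith [this.1]
  have hval_le : ∀ (o : Option I) (r : ∀ o', auxS S o'),
      val (auxU u c) o r ≤ auxU u c o r :=
    fun o r => csInf_le (hbdd o r) ⟨r, hself o r, rfl⟩
  have hsum : ∀ r : ∀ o', auxS S o', ∑ o : Option I, auxU u c o r = c := by
    intro r
    rw [Fintype.sum_option]
    show (c - ∑ i, u i fun j => r (some j)) + ∑ i, u i (fun j => r (some j)) = c
    ring
  have h1 : ∑ o : Option I, val (auxU u c) o (auxP p) = c := by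
    calc ∑ o : Option I, val (auxU u c) o (auxP p)
        = ∑ o : Option I, auxU u c o (auxP p) :=
          Finset.sum_congr rfl (fun o _ => hval_pbar o)
      _ = c := hsum _
  have h2 : ∑ o : Option I, val (auxU u c) o (auxP p) < ∑ o : Option I, val (auxU u c) o q :=
    Finset.sum_lt_sum (fun o _ => hle o) ⟨j, Finset.mem_univ j, hlt⟩
  have h3 : ∑ o : Option I, val (auxU u c) o q ≤ c := by
    calc ∑ o : Option I, val (auxU u c) o q
        ≤ ∑ o : Option I, auxU u c o q := Finset.sum_le_sum fun o _ => hval_le o q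
      _ = c := hsum q
  linarith
end

section
/- Every finite game restricted to pure strategies has an optimin point in pure strategies: let I be a finite nonempty set of players and, for each i ∈ I, let S i be a finite nonempty strategy set and u i : (Π j, S j) → ℝ a utility function. Then there exists a profile p̄ such that there is no profile p with v i p ≥ v i p̄ for all i ∈ I and v j p > v j p̄ for some j ∈ I. -/
/-- Every finite game restricted to pure strategies has an optimin point in pure strategies. -/
theorem exists_optimin_pure {I : Type*} [Fintype I] [Nonempty I] [DecidableEq I]
    {S : I → Type*} [∀ i, Fintype (S i)] [∀ i, Nonempty (S i)]
    (u : ∀ i : I, (∀ j, S j) → ℝ) :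
    ∃ pbar : ∀ j, S j, ¬ ∃ p : ∀ j, S j,
      (∀ i, val u i pbar ≤ val u i p) ∧ ∃ j, val u j pbar < val u j p := by
  obtain ⟨pbar, hmax⟩ := Finite.exists_max (fun p : ∀ j, S j => ∑ i, val u i p)
  refine ⟨pbar, ?_⟩
  rintro ⟨p, hle, j, hj⟩
  have : ∑ i, val u i pbar < ∑ i, val u i p :=
    Finset.sum_lt_sum (fun i _ => hle i) ⟨j, Finset.mem_univ j, hj⟩
  exact absurd (hmax p) (not_le.mpr this)
end

section
/- There exists an optimin point in every cooperative game in characteristic function form: for every finite nonempty player set N and every cohesive characteristic function u : Finset N → ℝ with u ∅ = 0, there exists a feasible payoff vector x : N → ℝ such that the vector (V i x)_{i ∈ N} is Pareto optimal among the value vectors of feasible payoff vectors, i.e. there is no feasible x' with V i x' ≥ V i x for all i ∈ N and V j x' > V j x for some j ∈ N. -/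
/-- The characteristic function `u` is cohesive: the worth of the grand coalition is at
least the total worth of any partition of the players into nonempty coalitions. -/
def Cohesive {N : Type*} [Fintype N] [DecidableEq N] (u : Finset N → ℝ) : Prop :=
  ∀ P : Finset (Finset N), (∀ S ∈ P, S.Nonempty) →
    ((P : Set (Finset N)).PairwiseDisjoint id) →
    P.biUnion id = Finset.univ →
    ∑ S ∈ P, u S ≤ u Finset.univ

/-- The value of a feasible payoff vector `x` to player `i`: the minimum of `x i` and of the
worst-case payoffs of `i` under profitable deviations of coalitions not containing `i`
(losses of the non-deviating coalition shared equally). -/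
noncomputable def coopVal {N : Type*} [Fintype N] [DecidableEq N]
    (u : Finset N → ℝ) (x : N → ℝ) (i : N) : ℝ :=
  sInf ({x i} ∪
    ((fun S : Finset N =>
        x i - ((∑ j ∈ Finset.univ \ S, x j) - u (Finset.univ \ S)) / (Finset.univ \ S).card) ''
      {S : Finset N | S.Nonempty ∧ i ∉ S ∧ ∑ j ∈ S, x j < u S}))

open Finset

namespace OptiminAux

variable {N : Type*} [Fintype N] [DecidableEq N]

noncomputable def fdev (u : Finset N → ℝ) (x : N → ℝ) (i : N) (S : Finset N) : ℝ :=
  x i - ((∑ j ∈ Finset.univ \ S, x j) - u (Finset.univ \ S)) / (Finset.univ \ S).card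

open scoped Classical in
noncomputable def devF (u : Finset N → ℝ) (x : N → ℝ) (i : N) : Finset (Finset N) :=
  (Finset.univ : Finset (Finset N)).filter
    (fun S => S.Nonempty ∧ i ∉ S ∧ ∑ j ∈ S, x j < u S)

noncomputable def devT (u : Finset N → ℝ) (x : N → ℝ) (i : N) : Finset (Finset N) :=
  insert Finset.univ (devF u x i)

lemma univ_mem_devT (u : Finset N → ℝ) (x : N → ℝ) (i : N) :
    (Finset.univ : Finset N) ∈ devT u x i := mem_insert_self _ _

lemma mem_devF {u : Finset N → ℝ} {x : N → ℝ} {i : N} {S : Finset N} :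
    S ∈ devF u x i ↔ S.Nonempty ∧ i ∉ S ∧ ∑ j ∈ S, x j < u S := by
  classical
  simp [devF]

lemma fdev_univ {u : Finset N → ℝ} (h0 : u ∅ = 0) (x : N → ℝ) (i : N) :
    fdev u x i Finset.univ = x i := by
  simp [fdev, Finset.sdiff_self, h0]

lemma coopVal_finite (u : Finset N → ℝ) (x : N → ℝ) (i : N) :
    ({x i} ∪
      ((fun S : Finset N =>
          x i - ((∑ j ∈ Finset.univ \ S, x j) - u (Finset.univ \ S)) / (Finset.univ \ S).card) ''
        {S : Finset N | S.Nonempty ∧ i ∉ S ∧ ∑ j ∈ S, x j < u S})).Finite :=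
  (Set.finite_singleton _).union ((Set.toFinite _).image _)

lemma coopVal_le_apply (u : Finset N → ℝ) (x : N → ℝ) (i : N) : coopVal u x i ≤ x i := by
  apply csInf_le (coopVal_finite u x i).bddBelow
  exact Or.inl rfl

lemma coopVal_le_fdev {u : Finset N → ℝ} {x : N → ℝ} {i : N} {S : Finset N}
    (hS : S.Nonempty) (hiS : i ∉ S) (hx : ∑ j ∈ S, x j < u S) :
    coopVal u x i ≤ fdev u x i S := by
  apply csInf_le (coopVal_finite u x i).bddBelow
  exact Or.inr ⟨S, ⟨hS, hiS, hx⟩, rfl⟩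

lemma coopVal_eq {u : Finset N → ℝ} (h0 : u ∅ = 0) (x : N → ℝ) (i : N) :
    coopVal u x i = (devT u x i).inf' ⟨_, univ_mem_devT u x i⟩ (fdev u x i) := by
  refine Eq.trans ?_ (Finset.inf'_eq_csInf_image _ _ _).symm
  unfold coopVal
  congr 1
  ext y
  constructor
  · rintro (rfl | ⟨S, hS, rfl⟩)
    · exact ⟨Finset.univ, univ_mem_devT u x i, fdev_univ h0 x i⟩
    · exact ⟨S, Finset.mem_insert_of_mem (mem_devF.2 hS), rfl⟩
  · rintro ⟨S, hS, rfl⟩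
    rcases Finset.mem_insert.1 hS with rfl | hS
    · exact Or.inl (fdev_univ h0 x i)
    · exact Or.inr ⟨S, mem_devF.1 hS, rfl⟩


lemma coopVal_le_c {u : Finset N → ℝ} (h0 : u ∅ = 0) (hcoh : Cohesive u)
    {x : N → ℝ} (hx : ∑ i, x i ≤ u Finset.univ) (i : N) :
    coopVal u x i ≤ u Finset.univ - u (Finset.univ \ {i}) := by
  rcases eq_or_ne (Finset.univ \ ({i} : Finset N)) ∅ with hE | hE
  · -- single player: univ = {i}
    have huniv : (Finset.univ : Finset N) = {i} := by
      have h1 : (Finset.univ : Finset N) ⊆ {i} := Finset.sdiff_eq_empty_iff_subset.1 hE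
      exact Finset.Subset.antisymm h1 (Finset.subset_univ _)
    have hxsum : ∑ j, x j = x i := by rw [huniv, Finset.sum_singleton]
    have := coopVal_le_apply u x i
    rw [hE, h0]
    linarith [hx, hxsum ▸ hx]
  · have hSne : (Finset.univ \ ({i} : Finset N)).Nonempty := Finset.nonempty_iff_ne_empty.2 hE
    by_cases hxi : x i ≤ u Finset.univ - u (Finset.univ \ {i})
    · exact (coopVal_le_apply u x i).trans hxi
    · push_neg at hxi
      -- cohesivity: u {i} + u (univ \ {i}) ≤ u univ
      have hkey : u {i} + u (Finset.univ \ {i}) ≤ u Finset.univ := by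
        have hne : ({i} : Finset N) ≠ Finset.univ \ {i} := by
          intro h
          have : i ∈ Finset.univ \ ({i} : Finset N) := h ▸ Finset.mem_singleton_self i
          simp at this
        have := hcoh {({i} : Finset N), Finset.univ \ {i}} ?_ ?_ ?_
        · rwa [Finset.sum_insert (by simpa using hne), Finset.sum_singleton] at this
        · intro S hS
          rcases Finset.mem_insert.1 hS with rfl | hS
          · exact Finset.singleton_nonempty i
          · rw [Finset.mem_singleton.1 hS]; exact hSne
        · intro a ha b hb hab
          simp only [Finset.coe_insert, Finset.coe_singleton, Set.mem_insert_iff,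
            Set.mem_singleton_iff] at ha hb
          rcases ha with rfl | rfl <;> rcases hb with rfl | rfl <;>
            first
              | exact absurd rfl hab
              | simpa [Function.onFun] using Finset.sdiff_disjoint.symm
              | simpa [Function.onFun] using Finset.sdiff_disjoint
        · rw [Finset.biUnion_insert, Finset.singleton_biUnion]
          simp [Finset.union_sdiff_of_subset (Finset.subset_univ _)]
      -- the deviation S = univ \ {i}
      have hdev : ∑ j ∈ Finset.univ \ ({i} : Finset N), x j < u (Finset.univ \ {i}) := by
        have hsub : ∑ j ∈ Finset.univ \ ({i} : Finset N), x j = (∑ j, x j) - x i := by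
          rw [Finset.sum_sdiff_eq_sub (Finset.subset_univ _), Finset.sum_singleton]
        rw [hsub]; linarith
      have hle := coopVal_le_fdev (u := u) (x := x) (i := i) hSne (by simp) hdev
      have hfd : fdev u x i (Finset.univ \ {i}) = u {i} := by
        have h1 : Finset.univ \ (Finset.univ \ ({i} : Finset N)) = {i} := by
          simp [Finset.sdiff_sdiff_self_left]
        rw [fdev, h1, Finset.sum_singleton, Finset.card_singleton]
        simp
      rw [hfd] at hle
      linarith


lemma exists_max_of_usc {X : Type*} [TopologicalSpace X] {K : Set X} (hK : IsCompact K)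
    (hKne : K.Nonempty) (F : X → ℝ)
    (H : ∀ z, ∃ G : X → ℝ, Continuous G ∧ G z = F z ∧ ∀ᶠ x in nhds z, F x ≤ G x) :
    ∃ x ∈ K, ∀ y ∈ K, F y ≤ F x := by
  by_contra h
  push_neg at h
  choose w hwK hw using h
  have hU : ∀ z (hz : z ∈ K), {x | F x < F (w z hz)} ∈ nhds z := by
    intro z hz
    obtain ⟨G, hGc, hGz, hGF⟩ := H z
    have h1 : {x | G x < F (w z hz)} ∈ nhds z := by
      have hop : IsOpen {x | G x < F (w z hz)} := isOpen_lt hGc continuous_const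
      refine hop.mem_nhds ?_
      simpa only [Set.mem_setOf_eq, hGz] using hw z hz
    filter_upwards [h1, hGF] with x h1' h2'
    exact lt_of_le_of_lt h2' h1'
  obtain ⟨t, ht⟩ := hK.elim_nhds_subcover' (fun z hz => {x | F x < F (w z hz)}) hU
  have htne : t.Nonempty := by
    obtain ⟨z0, hz0⟩ := hKne
    obtain ⟨z, hz, -⟩ := Set.mem_iUnion₂.1 (ht hz0)
    exact ⟨z, hz⟩
  obtain ⟨b, hb, hbmax⟩ := Finset.exists_max_image t (fun z => F (w z.1 z.2)) htne
  have hwb : w b.1 b.2 ∈ K := hwK _ _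
  obtain ⟨z, hz, hmem⟩ := Set.mem_iUnion₂.1 (ht hwb)
  exact absurd (lt_of_lt_of_le hmem (hbmax z hz)) (lt_irrefl _)


lemma usc_bound {u : Finset N → ℝ} (h0 : u ∅ = 0) (z : N → ℝ) :
    ∃ G : (N → ℝ) → ℝ, Continuous G ∧ G z = ∑ i, coopVal u z i ∧
      ∀ᶠ x in nhds z, (∑ i, coopVal u x i) ≤ G x := by
  refine ⟨fun x => ∑ i, (devT u z i).inf' ⟨_, univ_mem_devT u z i⟩ (fun S => fdev u x i S),
    ?_, ?_, ?_⟩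
  · apply continuous_finset_sum
    intro i _
    apply Continuous.finset_inf'_apply
    intro S _
    exact (continuous_apply i).sub
      (((continuous_finset_sum _ (fun j _ => continuous_apply j)).sub continuous_const).div_const _)
  · exact (Finset.sum_congr rfl (fun i _ => (coopVal_eq h0 z i).symm))
  · have hev : ∀ᶠ x in nhds z, ∀ i, ∀ S ∈ devF u z i, ∑ j ∈ S, x j < u S := by
      rw [Filter.eventually_all]
      intro i
      rw [Filter.eventually_all_finset]
      intro S hS
      obtain ⟨-, -, h3⟩ := mem_devF.1 hS
      have hop : IsOpen {x : N → ℝ | ∑ j ∈ S, x j < u S} :=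
        isOpen_lt (continuous_finset_sum _ (fun j _ => continuous_apply j)) continuous_const
      exact Filter.eventually_of_mem (hop.mem_nhds h3) (fun x hx => hx)
    filter_upwards [hev] with x hx
    apply Finset.sum_le_sum
    intro i _
    apply Finset.le_inf'
    intro S hS
    rcases Finset.mem_insert.1 hS with rfl | hS'
    · rw [fdev_univ h0]
      exact coopVal_le_apply u x i
    · obtain ⟨h1, h2, -⟩ := mem_devF.1 hS'
      exact coopVal_le_fdev h1 h2 (hx i S hS')

end OptiminAux

open OptiminAux

/-- Every cohesive TU cooperative game in characteristic function form has an optimin point: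
a feasible payoff vector whose value vector is Pareto optimal among feasible vectors. -/
theorem exists_optimin_cooperative {N : Type*} [Fintype N] [DecidableEq N] [Nonempty N]
    (u : Finset N → ℝ) (h0 : u ∅ = 0) (hcoh : Cohesive u) :
    ∃ x : N → ℝ, (∑ i, x i ≤ u Finset.univ) ∧
      ¬ ∃ x' : N → ℝ, (∑ i, x' i ≤ u Finset.univ) ∧
        (∀ i, coopVal u x i ≤ coopVal u x' i) ∧ ∃ j, coopVal u x j < coopVal u x' j := by
  classical
  set n := Fintype.card N with hn
  have hn0 : 0 < n := Fintype.card_pos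
  set F : (N → ℝ) → ℝ := fun x => ∑ i, coopVal u x i with hF
  set x0 : N → ℝ := fun _ => u Finset.univ / n with hx0def
  have hx0sum : ∑ i, x0 i = u Finset.univ := by
    rw [hx0def, Finset.sum_const, Finset.card_univ, nsmul_eq_mul, mul_div_cancel₀]
    exact_mod_cast hn0.ne'
  set σ0 := F x0 with hσ0
  set c : N → ℝ := fun i => u Finset.univ - u (Finset.univ \ {i}) with hc
  set C := ∑ i, c i with hC
  have hUnivNe : (Finset.univ : Finset N).Nonempty := Finset.univ_nonempty
  set L : ℝ := min (u Finset.univ / n) (σ0 - C + Finset.univ.inf' hUnivNe c) with hL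
  have hkeyL : ∀ x' : N → ℝ, (∑ i, x' i ≤ u Finset.univ) → σ0 < F x' → ∀ j, L ≤ x' j := by
    intro x' hx' hσ j
    have h1 : coopVal u x' j ≤ x' j := coopVal_le_apply u x' j
    have h2 : ∑ i ∈ Finset.univ.erase j, coopVal u x' i ≤ ∑ i ∈ Finset.univ.erase j, c i :=
      Finset.sum_le_sum (fun i _ => coopVal_le_c h0 hcoh hx' i)
    have h3 : coopVal u x' j + ∑ i ∈ Finset.univ.erase j, coopVal u x' i = F x' :=
      Finset.add_sum_erase _ _ (Finset.mem_univ j)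
    have h4 : c j + ∑ i ∈ Finset.univ.erase j, c i = C :=
      Finset.add_sum_erase _ _ (Finset.mem_univ j)
    have h5 : Finset.univ.inf' hUnivNe c ≤ c j := Finset.inf'_le _ (Finset.mem_univ j)
    have h6 : L ≤ σ0 - C + Finset.univ.inf' hUnivNe c := min_le_right _ _
    linarith
  set M : ℝ := u Finset.univ - ((n - 1 : ℕ) : ℝ) * L with hM
  set K : Set (N → ℝ) := {x | (∀ i, L ≤ x i) ∧ ∑ i, x i ≤ u Finset.univ} with hK
  have hx0K : x0 ∈ K := ⟨fun i => min_le_left _ _, le_of_eq hx0sum⟩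
  have hKsub : K ⊆ Set.pi Set.univ (fun _ : N => Set.Icc L M) := by
    rintro x ⟨hxl, hxs⟩ i -
    refine ⟨hxl i, ?_⟩
    have h1 : (Finset.univ.erase i).card • L ≤ ∑ j ∈ Finset.univ.erase i, x j :=
      Finset.card_nsmul_le_sum _ _ _ (fun j _ => hxl j)
    have h2 : x i + ∑ j ∈ Finset.univ.erase i, x j = ∑ j, x j :=
      Finset.add_sum_erase _ _ (Finset.mem_univ i)
    have h3 : (Finset.univ.erase i).card = n - 1 := by
      rw [Finset.card_erase_of_mem (Finset.mem_univ i), Finset.card_univ]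
    rw [h3, nsmul_eq_mul] at h1
    rw [hM]
    linarith
  have hKclosed : IsClosed K := by
    have : K = (⋂ i, {x : N → ℝ | L ≤ x i}) ∩ {x | ∑ i, x i ≤ u Finset.univ} := by
      ext x; simp [hK, Set.mem_iInter]
    rw [this]
    exact IsClosed.inter
      (isClosed_iInter fun i => isClosed_le continuous_const (continuous_apply i))
      (isClosed_le (continuous_finset_sum _ (fun j _ => continuous_apply j)) continuous_const)
  have hKcpt : IsCompact K :=
    IsCompact.of_isClosed_subset (isCompact_univ_pi (fun _ => isCompact_Icc)) hKclosed hKsub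
  obtain ⟨xs, hxsK, hxsmax⟩ := exists_max_of_usc hKcpt ⟨x0, hx0K⟩ F (fun z => usc_bound h0 z)
  refine ⟨xs, hxsK.2, ?_⟩
  rintro ⟨x', hx'f, hall, j, hj⟩
  have hFlt : F xs < F x' := Finset.sum_lt_sum (fun i _ => hall i) ⟨j, Finset.mem_univ j, hj⟩
  have hσle : σ0 ≤ F xs := hxsmax x0 hx0K
  have hx'K : x' ∈ K := ⟨hkeyL x' hx'f (lt_of_le_of_lt hσle hFlt), hx'f⟩
  exact absurd (hxsmax x' hx'K) (not_le.2 hFlt)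
end

section
/- Competitive economic equilibrium satisfies the optimin criterion: let (Y i, u i, F i)_{i ∈ I} be an abstract economy with I finite and nonempty, each Y i nonempty, and each u i bounded. If ȳ is a feasible profile such that no player has a feasible profitable unilateral deviation (for every i, there is no q_i ∈ F i (ȳ₋ᵢ) with u i (q_i, ȳ₋ᵢ) > u i ȳ) and the utility vector (u i ȳ)_{i ∈ I} is Pareto optimal among feasible profiles (there is no feasible y with u i y ≥ u i ȳ for all i and u j y > u j ȳ for some j), then ȳ is an optimin point of the economy. -/
/-- The deviation set `B₋ᵢ y` in an abstract economy. -/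
def DevE {I : Type*} [DecidableEq I] {Y : I → Type*}
    (u : ∀ i : I, (∀ j, Y j) → ℝ)
    (F : ∀ i : I, (∀ j : {j : I // j ≠ i}, Y j) → Set (Y i))
    (i : I) (y : ∀ j, Y j) : Set (∀ j, Y j) :=
  {q | q i = y i ∧ ∀ j, j ≠ i →
    (q j = y j ∨
      (q j ∈ F j (fun k => y k.1) ∧ u j (Function.update y j (q j)) > u j y))}

/-- The value of a profile `y` to player `i` in an abstract economy. -/
noncomputable def valE {I : Type*} [DecidableEq I] {Y : I → Type*}
    (u : ∀ i : I, (∀ j, Y j) → ℝ)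
    (F : ∀ i : I, (∀ j : {j : I // j ≠ i}, Y j) → Set (Y i))
    (i : I) (y : ∀ j, Y j) : ℝ :=
  sInf (u i '' DevE u F i y)

/-- A competitive equilibrium (a feasible profile with no feasible profitable unilateral
deviations whose utility vector is Pareto optimal among feasible profiles) is an optimin
point of the abstract economy. -/
theorem competitive_equilibrium_isOptimin {I : Type*} [Fintype I] [Nonempty I] [DecidableEq I]
    {Y : I → Type*} [∀ i, Nonempty (Y i)]
    (u : ∀ i : I, (∀ j, Y j) → ℝ) (hb : ∀ i, ∃ C : ℝ, ∀ y, |u i y| ≤ C)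
    (F : ∀ i : I, (∀ j : {j : I // j ≠ i}, Y j) → Set (Y i))
    (ybar : ∀ j, Y j)
    (hfeas : ∀ i, ybar i ∈ F i (fun j => ybar j.1))
    (hnodev : ∀ i : I, ¬ ∃ q : Y i, q ∈ F i (fun j => ybar j.1) ∧
      u i (Function.update ybar i q) > u i ybar)
    (hpareto : ¬ ∃ y : ∀ j, Y j, (∀ i, y i ∈ F i (fun j => y j.1)) ∧
      (∀ i, u i ybar ≤ u i y) ∧ ∃ j, u j ybar < u j y) :
    ¬ ∃ y : ∀ j, Y j, (∀ i, y i ∈ F i (fun j => y j.1)) ∧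
      (∀ i, valE u F i ybar ≤ valE u F i y) ∧ ∃ j, valE u F j ybar < valE u F j y := by
  -- DevE at ybar is {ybar}
  have hdev : ∀ i, DevE u F i ybar = {ybar} := by
    intro i
    ext q
    constructor
    · rintro ⟨h1, h2⟩
      have : q = ybar := by
        funext j
        by_cases hj : j = i
        · subst hj; exact h1
        · rcases h2 j hj with h | h
          · exact h
          · exact absurd ⟨q j, h.1, h.2⟩ (hnodev j)
      simp [this]
    · rintro rfl
      exact ⟨rfl, fun j _ => Or.inl rfl⟩
  have hval_bar : ∀ i, valE u F i ybar = u i ybar := by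
    intro i
    simp [valE, hdev i]
  have hval_le : ∀ i (y : ∀ j, Y j), valE u F i y ≤ u i y := by
    intro i y
    obtain ⟨C, hC⟩ := hb i
    refine csInf_le ⟨-C, ?_⟩ ⟨y, ⟨rfl, fun j _ => Or.inl rfl⟩, rfl⟩
    rintro _ ⟨z, _, rfl⟩
    linarith [(abs_le.mp (hC z)).1]
  rintro ⟨y, hy, hall, j, hj⟩
  exact hpareto ⟨y, hy,
    fun i => le_trans (by rw [← hval_bar i]; exact hall i) (hval_le i y),
    j, lt_of_lt_of_le (by rw [← hval_bar j]; exact hj) (hval_le j y)⟩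
end

section
/- In a two-person zero-sum game, the optimin points are exactly the pairs of maximin strategies: let Y₁, Y₂ be nonempty sets, u₁ : Y₁ × Y₂ → ℝ bounded, and u₂ = −u₁. Then a profile (y₁*, y₂*) ∈ Y₁ × Y₂ is an optimin point if and only if y₁* maximizes y₁ ↦ inf {u₁ (y₁, y₂) | y₂ ∈ Y₂} over Y₁ and y₂* maximizes y₂ ↦ inf {u₂ (y₁, y₂) | y₁ ∈ Y₁} over Y₂. -/
/-- The value of `(y₁, y₂)` to player 1 in a two-person game: the infimum of
`u₁ (y₁, ·)` over `{y₂} ∪ B₂ (y₁, y₂)`, where `B₂` is player 2's better-response set. -/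
noncomputable def val₁ {Y₁ Y₂ : Type*} (u₁ u₂ : Y₁ × Y₂ → ℝ) (y₁ : Y₁) (y₂ : Y₂) : ℝ :=
  sInf ((fun y₂' => u₁ (y₁, y₂')) '' insert y₂ {y₂' : Y₂ | u₂ (y₁, y₂') > u₂ (y₁, y₂)})

/-- The value of `(y₁, y₂)` to player 2, symmetrically. -/
noncomputable def val₂ {Y₁ Y₂ : Type*} (u₁ u₂ : Y₁ × Y₂ → ℝ) (y₁ : Y₁) (y₂ : Y₂) : ℝ :=
  sInf ((fun y₁' => u₂ (y₁', y₂)) '' insert y₁ {y₁' : Y₁ | u₁ (y₁', y₂) > u₁ (y₁, y₂)})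

lemma val_eq {Y₁ Y₂ : Type*} (u₁ u₂ : Y₁ × Y₂ → ℝ) (hb : ∃ C : ℝ, ∀ p, |u₁ p| ≤ C)
    (hzs : ∀ p, u₂ p = -u₁ p) (y₁ : Y₁) (y₂ : Y₂) :
    sInf ((fun y₂' => u₁ (y₁, y₂')) '' insert y₂ {y₂' : Y₂ | u₂ (y₁, y₂') > u₂ (y₁, y₂)})
      = sInf (Set.range fun y₂' : Y₂ => u₁ (y₁, y₂')) := by
  obtain ⟨C, hC⟩ := hb
  set S := (fun y₂' => u₁ (y₁, y₂')) '' insert y₂ {y₂' : Y₂ | u₂ (y₁, y₂') > u₂ (y₁, y₂)}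
  have hSne : S.Nonempty := ⟨u₁ (y₁, y₂), ⟨y₂, Set.mem_insert _ _, rfl⟩⟩
  have hSbdd : BddBelow S := ⟨-C, by rintro _ ⟨b, -, rfl⟩; linarith [abs_le.1 (hC (y₁, b))]⟩
  have hRbdd : BddBelow (Set.range fun y₂' : Y₂ => u₁ (y₁, y₂')) :=
    ⟨-C, by rintro _ ⟨b, rfl⟩; linarith [abs_le.1 (hC (y₁, b))]⟩
  refine le_antisymm ?_ (csInf_le_csInf hRbdd hSne (Set.image_subset_range _ _))
  refine le_csInf ⟨_, Set.mem_range_self y₂⟩ ?_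
  rintro _ ⟨b, rfl⟩
  by_cases h : u₁ (y₁, b) < u₁ (y₁, y₂)
  · exact csInf_le hSbdd ⟨b, Or.inr (by simp only [Set.mem_setOf_eq, hzs]; linarith), rfl⟩
  · exact le_trans (csInf_le hSbdd ⟨y₂, Set.mem_insert _ _, rfl⟩) (not_lt.1 h)

lemma val2_eq {Y₁ Y₂ : Type*} (u₁ u₂ : Y₁ × Y₂ → ℝ) (hb : ∃ C : ℝ, ∀ p, |u₁ p| ≤ C)
    (hzs : ∀ p, u₂ p = -u₁ p) (y₁ : Y₁) (y₂ : Y₂) :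
    sInf ((fun y₁' => u₂ (y₁', y₂)) '' insert y₁ {y₁' : Y₁ | u₁ (y₁', y₂) > u₁ (y₁, y₂)})
      = sInf (Set.range fun y₁' : Y₁ => u₂ (y₁', y₂)) := by
  obtain ⟨C, hC⟩ := hb
  set S := (fun y₁' => u₂ (y₁', y₂)) '' insert y₁ {y₁' : Y₁ | u₁ (y₁', y₂) > u₁ (y₁, y₂)}
  have hSne : S.Nonempty := ⟨u₂ (y₁, y₂), ⟨y₁, Set.mem_insert _ _, rfl⟩⟩
  have hSbdd : BddBelow S := ⟨-C, by rintro _ ⟨b, -, rfl⟩; simp only [hzs]; linarith [abs_le.1 (hC (b, y₂))]⟩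
  have hRbdd : BddBelow (Set.range fun y₁' : Y₁ => u₂ (y₁', y₂)) :=
    ⟨-C, by rintro _ ⟨b, rfl⟩; simp only [hzs]; linarith [abs_le.1 (hC (b, y₂))]⟩
  refine le_antisymm ?_ (csInf_le_csInf hRbdd hSne (Set.image_subset_range _ _))
  refine le_csInf ⟨_, Set.mem_range_self y₁⟩ ?_
  rintro _ ⟨b, rfl⟩
  by_cases h : u₂ (b, y₂) < u₂ (y₁, y₂)
  · refine csInf_le hSbdd ⟨b, Or.inr ?_, rfl⟩
    simp only [Set.mem_setOf_eq]
    have := h; rw [hzs, hzs] at this; linarith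
  · exact le_trans (csInf_le hSbdd ⟨y₁, Set.mem_insert _ _, rfl⟩) (not_lt.1 h)

/-- In a two-person zero-sum game, a profile is an optimin point (its value vector is
Pareto optimal) iff it is a pair of maximin strategies. -/
theorem zero_sum_optimin_iff_maximin {Y₁ Y₂ : Type*} [Nonempty Y₁] [Nonempty Y₂]
    (u₁ u₂ : Y₁ × Y₂ → ℝ) (hb : ∃ C : ℝ, ∀ p, |u₁ p| ≤ C)
    (hzs : ∀ p, u₂ p = -u₁ p) (y₁s : Y₁) (y₂s : Y₂) :
    (¬ ∃ (y₁ : Y₁) (y₂ : Y₂),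
        (val₁ u₁ u₂ y₁s y₂s ≤ val₁ u₁ u₂ y₁ y₂ ∧ val₂ u₁ u₂ y₁s y₂s ≤ val₂ u₁ u₂ y₁ y₂) ∧
        (val₁ u₁ u₂ y₁s y₂s < val₁ u₁ u₂ y₁ y₂ ∨ val₂ u₁ u₂ y₁s y₂s < val₂ u₁ u₂ y₁ y₂)) ↔
    ((∀ y₁ : Y₁, sInf (Set.range fun y₂ : Y₂ => u₁ (y₁, y₂)) ≤
        sInf (Set.range fun y₂ : Y₂ => u₁ (y₁s, y₂))) ∧
     (∀ y₂ : Y₂, sInf (Set.range fun y₁ : Y₁ => u₂ (y₁, y₂)) ≤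
        sInf (Set.range fun y₁ : Y₁ => u₂ (y₁, y₂s)))) := by
  have h1 : ∀ (y₁ : Y₁) (y₂ : Y₂), val₁ u₁ u₂ y₁ y₂ = sInf (Set.range fun y₂' : Y₂ => u₁ (y₁, y₂')) :=
    fun y₁ y₂ => val_eq u₁ u₂ hb hzs y₁ y₂
  have h2 : ∀ (y₁ : Y₁) (y₂ : Y₂), val₂ u₁ u₂ y₁ y₂ = sInf (Set.range fun y₁' : Y₁ => u₂ (y₁', y₂)) :=
    fun y₁ y₂ => val2_eq u₁ u₂ hb hzs y₁ y₂
  simp only [val₁, val₂] at h1 h2 ⊢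
  simp only [h1, h2]
  constructor
  · intro h
    constructor
    · intro y₁; by_contra hc; push_neg at hc
      exact h ⟨y₁, y₂s, ⟨le_of_lt hc, le_refl _⟩, Or.inl hc⟩
    · intro y₂; by_contra hc; push_neg at hc
      exact h ⟨y₁s, y₂, ⟨le_refl _, le_of_lt hc⟩, Or.inr hc⟩
  · rintro ⟨hA, hB⟩ ⟨y₁, y₂, _, h | h⟩
    · exact absurd (hA y₁) (not_le.2 h)
    · exact absurd (hB y₂) (not_le.2 h)
end
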